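/- Fix a > 0 and h > 0 and take the untilted case θ = 0. For 0 < b ≤ a let ε(b) = √(1 − b²/a²), LB(b) = πab / ( h + (16b/(3π))·K(ε(b))/K(0) ) and UB(b) = πab / ( h + (πb/2)·K(ε(b))/K(0) ). Then, as b → 0⁺, UB(b) → 0 and UB(b)/LB(b) → 1; i.e., when the elliptical perforation degenerates into a slit of zero width and finite length, the Rayleigh conductivity bounds tend to zero and the lower and upper bounds converge to each other. -/

import Mathlib

open Real MeasureTheory Filter Topology

noncomputable def Kell (ε : ℝ) : ℝ :=
  ∫ φ in (0:ℝ)..(π/2), (Real.sqrt (1 - ε ^ 2 * Real.sin φ ^ 2))⁻¹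

noncomputable def Eell (ε : ℝ) : ℝ :=
  ∫ φ in (0:ℝ)..(π/2), Real.sqrt (1 - ε ^ 2 * Real.sin φ ^ 2)

noncomputable def Dell (ε : ℝ) : ℝ :=
  ∫ φ in (0:ℝ)..(π/2), Real.sin φ ^ 2 * (Real.sqrt (1 - ε ^ 2 * Real.sin φ ^ 2))⁻¹

lemma Kell_zero' : Kell 0 = π / 2 := by simp [Kell]

lemma Kell_nonneg' (ε : ℝ) : 0 ≤ Kell ε := by
  apply intervalIntegral.integral_nonneg (by positivity)
  intro x _; positivity

lemma key_lemma (a : ℝ) (ha : 0 < a) :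
    Tendsto (fun b : ℝ => b * Kell (Real.sqrt (1 - b ^ 2 / a ^ 2))) (𝓝[>] (0:ℝ)) (𝓝 0) := by
  set μ := volume.restrict (Set.Ioc (0:ℝ) (π/2)) with hμ
  set F : ℝ → ℝ → ℝ := fun b φ => b * (Real.sqrt (1 - Real.sqrt (1 - b ^ 2 / a ^ 2) ^ 2 * Real.sin φ ^ 2))⁻¹ with hF
  have hrw : ∀ b : ℝ, b * Kell (Real.sqrt (1 - b ^ 2 / a ^ 2)) = ∫ φ, F b φ ∂μ := by
    intro b
    rw [Kell, ← intervalIntegral.integral_const_mul,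
      intervalIntegral.integral_of_le (by positivity : (0:ℝ) ≤ π/2)]
  have hmem : Set.Ioo (0:ℝ) a ∈ 𝓝[>] (0:ℝ) := Ioo_mem_nhdsGT_of_mem ⟨le_refl 0, ha⟩
  have hsq : ∀ b : ℝ, b ∈ Set.Ioo (0:ℝ) a →
      Real.sqrt (1 - b ^ 2 / a ^ 2) ^ 2 = 1 - b ^ 2 / a ^ 2 := by
    intro b hb
    rw [Real.sq_sqrt]
    have h1 : b ^ 2 ≤ a ^ 2 := by nlinarith [hb.1, hb.2]
    have : b ^ 2 / a ^ 2 ≤ 1 := by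
      rw [div_le_one (by positivity)]; exact h1
    linarith
  have key1 : ∀ b : ℝ, b ∈ Set.Ioo (0:ℝ) a → ∀ φ : ℝ,
      1 - Real.sqrt (1 - b ^ 2 / a ^ 2) ^ 2 * Real.sin φ ^ 2
        = Real.cos φ ^ 2 + (b ^ 2 / a ^ 2) * Real.sin φ ^ 2 := by
    intro b hb φ
    rw [hsq b hb]
    have := Real.sin_sq_add_cos_sq φ
    ring_nf
    nlinarith [Real.sin_sq_add_cos_sq φ]
  have := MeasureTheory.tendsto_integral_filter_of_dominated_convergence
    (μ := μ) (F := F) (f := fun _ => (0:ℝ)) (l := 𝓝[>] (0:ℝ)) (fun _ => a)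
    ?_ ?_ ?_ ?_
  · have h0 : (∫ (_:ℝ), (0:ℝ) ∂μ) = 0 := by simp
    rw [h0] at this
    exact Tendsto.congr (fun b => (hrw b).symm) this
  · -- measurability
    filter_upwards with b
    apply Measurable.aestronglyMeasurable
    exact (measurable_const.mul
      (((measurable_const.sub ((measurable_const.mul ((Real.measurable_sin.pow_const 2)))) ).sqrt).inv))
  · -- bound
    filter_upwards [hmem] with b hb
    refine Filter.Eventually.of_forall (fun φ => ?_)
    have hb0 : 0 < b := hb.1
    have h1 : 1 - Real.sqrt (1 - b ^ 2 / a ^ 2) ^ 2 * Real.sin φ ^ 2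
        = Real.cos φ ^ 2 + (b ^ 2 / a ^ 2) * Real.sin φ ^ 2 := key1 b hb φ
    have h2 : (b/a) ^ 2 ≤ Real.cos φ ^ 2 + (b ^ 2 / a ^ 2) * Real.sin φ ^ 2 := by
      have hba : b ^ 2 / a ^ 2 ≤ 1 := by
        rw [div_le_one (by positivity)]; nlinarith [hb.2]
      have := Real.sin_sq_add_cos_sq φ
      have hs : Real.sin φ ^ 2 ≤ 1 := Real.sin_sq_le_one φ
      rw [div_pow]
      nlinarith [sq_nonneg (Real.cos φ), sq_nonneg (Real.sin φ)]
    have h3 : b / a ≤ Real.sqrt (1 - Real.sqrt (1 - b ^ 2 / a ^ 2) ^ 2 * Real.sin φ ^ 2) := by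
      rw [h1]
      calc b / a = Real.sqrt ((b/a)^2) := (Real.sqrt_sq (by positivity)).symm
        _ ≤ _ := Real.sqrt_le_sqrt h2
      
    have hpos : 0 < Real.sqrt (1 - Real.sqrt (1 - b ^ 2 / a ^ 2) ^ 2 * Real.sin φ ^ 2) :=
      lt_of_lt_of_le (by positivity) h3
    have h4 : (Real.sqrt (1 - Real.sqrt (1 - b ^ 2 / a ^ 2) ^ 2 * Real.sin φ ^ 2))⁻¹ ≤ a / b := by
      rw [inv_le_comm₀ hpos (by positivity)]
      calc (a/b)⁻¹ = b/a := by rw [inv_div]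
        _ ≤ _ := h3
    have hFnn : 0 ≤ F b φ := by
      apply mul_nonneg hb0.le
      positivity
    rw [Real.norm_eq_abs, abs_of_nonneg hFnn]
    calc F b φ ≤ b * (a / b) := by
          exact mul_le_mul_of_nonneg_left h4 hb0.le
      _ = a := by field_simp
  · refine integrableOn_const ?_
    exact measure_Ioc_lt_top.ne
  · -- pointwise limit
    have hne : ∀ᵐ φ ∂μ, φ ≠ π/2 := by
      apply Filter.Eventually.filter_mono (ae_mono Measure.restrict_le_self)
      rw [ae_iff]
      have : {x : ℝ | ¬ x ≠ π/2} = {π/2} := by ext x; simp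
      rw [this]
      exact Real.volume_singleton
    filter_upwards [ae_restrict_mem measurableSet_Ioc, hne] with φ hφ hφne
    have hφlt : φ < π/2 := lt_of_le_of_ne hφ.2 hφne
    have hcos : 0 < Real.cos φ := Real.cos_pos_of_mem_Ioo ⟨by linarith [hφ.1, Real.pi_pos], hφlt⟩
    apply squeeze_zero'
    · filter_upwards [hmem] with b hb
      exact mul_nonneg hb.1.le (by positivity)
    · filter_upwards [hmem] with b hb
      have h1 := key1 b hb φ
      have h2 : Real.cos φ ≤ Real.sqrt (1 - Real.sqrt (1 - b ^ 2 / a ^ 2) ^ 2 * Real.sin φ ^ 2) := by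
        rw [h1]
        calc Real.cos φ = Real.sqrt (Real.cos φ ^ 2) := (Real.sqrt_sq hcos.le).symm
          _ ≤ _ := Real.sqrt_le_sqrt (le_add_of_nonneg_right (by positivity))
      have hpos : 0 < Real.sqrt (1 - Real.sqrt (1 - b ^ 2 / a ^ 2) ^ 2 * Real.sin φ ^ 2) :=
        lt_of_lt_of_le hcos h2
      have h4 : (Real.sqrt (1 - Real.sqrt (1 - b ^ 2 / a ^ 2) ^ 2 * Real.sin φ ^ 2))⁻¹
          ≤ (Real.cos φ)⁻¹ := by
        exact inv_anti₀ hcos h2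
      calc F b φ ≤ b * (Real.cos φ)⁻¹ := mul_le_mul_of_nonneg_left h4 hb.1.le
        _ = b / Real.cos φ := by rw [div_eq_mul_inv]
    · have hb0 : Tendsto (fun b : ℝ => b) (𝓝[>] (0:ℝ)) (𝓝 0) :=
        tendsto_id.mono_left nhdsWithin_le_nhds
      simpa using hb0.div_const (Real.cos φ)


/-- Untilted case `θ = 0`: as the semi-minor axis `b` tends to `0⁺` (the perforation
degenerates into a slit of zero width and finite length `2a`), the upper Rayleigh
conductivity bound tends to `0` and the ratio of upper to lower bound tends to `1`. -/
theorem slit_zero_width_limit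
    (a h : ℝ) (ha : 0 < a) (hh : 0 < h) :
    Tendsto (fun b : ℝ =>
        π * a * b / (h + (π * b / 2) * (Kell (Real.sqrt (1 - b ^ 2 / a ^ 2)) / Kell 0)))
      (𝓝[>] 0) (𝓝 0) ∧
    Tendsto (fun b : ℝ =>
        (π * a * b / (h + (π * b / 2) * (Kell (Real.sqrt (1 - b ^ 2 / a ^ 2)) / Kell 0))) /
        (π * a * b / (h + (16 * b / (3 * π)) * (Kell (Real.sqrt (1 - b ^ 2 / a ^ 2)) / Kell 0))))
      (𝓝[>] 0) (𝓝 1) := by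
  have hg := key_lemma a ha
  have hK0 : Kell 0 = π / 2 := Kell_zero'
  have hK0pos : 0 < Kell 0 := by rw [hK0]; positivity
  set K : ℝ → ℝ := fun b => Kell (Real.sqrt (1 - b ^ 2 / a ^ 2)) with hKdef
  -- denominator limits
  have hD1 : Tendsto (fun b : ℝ => h + (π * b / 2) * (K b / Kell 0)) (𝓝[>] 0) (𝓝 h) := by
    have : ∀ b : ℝ, h + (π * b / 2) * (K b / Kell 0)
        = h + (π / 2 / Kell 0) * (b * K b) := by intro b; ring
    simp only [this]
    have h2 : Tendsto (fun b : ℝ => h + (π / 2 / Kell 0) * (b * K b)) (𝓝[>] 0)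
        (𝓝 (h + (π / 2 / Kell 0) * 0)) := tendsto_const_nhds.add (hg.const_mul _)
    simpa using h2
  have hD2 : Tendsto (fun b : ℝ => h + (16 * b / (3 * π)) * (K b / Kell 0)) (𝓝[>] 0) (𝓝 h) := by
    have : ∀ b : ℝ, h + (16 * b / (3 * π)) * (K b / Kell 0)
        = h + (16 / (3 * π) / Kell 0) * (b * K b) := by intro b; ring
    simp only [this]
    have h2 : Tendsto (fun b : ℝ => h + (16 / (3 * π) / Kell 0) * (b * K b)) (𝓝[>] 0)
        (𝓝 (h + (16 / (3 * π) / Kell 0) * 0)) := tendsto_const_nhds.add (hg.const_mul _)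
    simpa using h2
  have hnum : Tendsto (fun b : ℝ => π * a * b) (𝓝[>] 0) (𝓝 0) := by
    have : Tendsto (fun b : ℝ => π * a * b) (𝓝 0) (𝓝 (π * a * 0)) :=
      (continuous_const.mul continuous_id).tendsto 0
    simpa using this.mono_left nhdsWithin_le_nhds
  constructor
  · have := hnum.div hD1 hh.ne'
    rw [zero_div] at this
    exact this
  · -- eventual equality with D2/D1
    have heq : ∀ᶠ b in 𝓝[>] (0:ℝ),
        (π * a * b / (h + (π * b / 2) * (K b / Kell 0))) /
        (π * a * b / (h + (16 * b / (3 * π)) * (K b / Kell 0)))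
        = (h + (16 * b / (3 * π)) * (K b / Kell 0)) / (h + (π * b / 2) * (K b / Kell 0)) := by
      filter_upwards [self_mem_nhdsWithin] with b (hb : 0 < b)
      have hx : π * a * b ≠ 0 := by positivity
      have hKnn : 0 ≤ K b := Kell_nonneg' _
      have hd1 : 0 < h + (π * b / 2) * (K b / Kell 0) := by positivity
      have hd2 : 0 < h + (16 * b / (3 * π)) * (K b / Kell 0) := by positivity
      field_simp
    refine Tendsto.congr' (heq.mono fun b hb => hb.symm) ?_
    have := hD2.div hD1 hh.ne'
    rw [div_self hh.ne'] at this
    exact this
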